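/- Let Π be a finite type and f : Π → ℕ. Assume that for every integer i ≥ 1 the number of elements π ∈ Π with f(π) > i is at most the number of elements with f(π) = i. Then for every integer i ≥ 1 one has 2^(i−1) · |{π ∈ Π : f(π) = i}| ≤ |{π ∈ Π : f(π) ≥ 1}|; in particular, if {π : f(π) ≥ 1} is nonempty, the probability that a uniformly random element π of {π : f(π) ≥ 1} satisfies f(π) = i is at most 1/2^(i−1). -/

import Mathlib

/-- If for every `i ≥ 1` the number of elements with `f π > i` is at most the number
with `f π = i`, then for every `i ≥ 1`,
`2^(i-1) · |{π : f π = i}| ≤ |{π : f π ≥ 1}|`; in particular, if `{π : f π ≥ 1}` is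
nonempty, a uniformly random element of it satisfies `f π = i` with probability at
most `1/2^(i-1)`. -/
theorem stmt_2 {P : Type*} [Fintype P] (f : P → ℕ)
    (h : ∀ i : ℕ, 1 ≤ i →
      (Finset.univ.filter (fun π => i < f π)).card ≤
        (Finset.univ.filter (fun π => f π = i)).card) :
    ∀ i : ℕ, 1 ≤ i →
      (2 ^ (i - 1) * (Finset.univ.filter (fun π => f π = i)).card ≤
        (Finset.univ.filter (fun π => 1 ≤ f π)).card) ∧
      ((Finset.univ.filter (fun π => 1 ≤ f π)).Nonempty →
        ((Finset.univ.filter (fun π => f π = i)).card : ℝ) /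
            ((Finset.univ.filter (fun π => 1 ≤ f π)).card : ℝ) ≤
          1 / 2 ^ (i - 1)) := by
  classical
  set A : ℕ → ℕ := fun i => (Finset.univ.filter (fun π => i ≤ f π)).card with hA
  have hsplit : ∀ i : ℕ, 1 ≤ i →
      A i = (Finset.univ.filter (fun π => f π = i)).card + A (i + 1) := by
    intro i hi
    have : (Finset.univ.filter (fun π => i ≤ f π)) =
        (Finset.univ.filter (fun π => f π = i)) ∪
          (Finset.univ.filter (fun π => i + 1 ≤ f π)) := by
      ext π
      simp only [Finset.mem_filter, Finset.mem_union, Finset.mem_univ, true_and]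
      omega
    have hdisj : Disjoint (Finset.univ.filter (fun π => f π = i))
        (Finset.univ.filter (fun π => i + 1 ≤ f π)) := by
      rw [Finset.disjoint_filter]
      intro π _ hπ
      omega
    rw [hA]
    simp only
    rw [this, Finset.card_union_of_disjoint hdisj]
  have hstep : ∀ i : ℕ, 1 ≤ i → 2 * A (i + 1) ≤ A i := by
    intro i hi
    have h1 := h i hi
    have h2 : A (i + 1) = (Finset.univ.filter (fun π => i < f π)).card := by
      simp only [hA, Nat.lt_iff_add_one_le]
    have := hsplit i hi
    omega
  have hmain : ∀ i : ℕ, 1 ≤ i → 2 ^ (i - 1) * A i ≤ A 1 := by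
    intro i hi
    induction i with
    | zero => omega
    | succ n ih =>
      rcases Nat.eq_or_lt_of_le hi with h0 | h0
      · simp [← h0]
      · have hn : 1 ≤ n := by omega
        have := hstep n hn
        have h3 := ih hn
        have : 2 ^ (n + 1 - 1) * A (n + 1) = 2 ^ (n - 1) * (2 * A (n + 1)) := by
          rw [← mul_assoc]
          congr 1
          rw [← pow_succ]
          congr 1
          omega
        calc 2 ^ (n + 1 - 1) * A (n + 1) = 2 ^ (n - 1) * (2 * A (n + 1)) := this
          _ ≤ 2 ^ (n - 1) * A n := by
              exact Nat.mul_le_mul_left _ (hstep n hn)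
          _ ≤ A 1 := h3
  intro i hi
  have hkey : 2 ^ (i - 1) * (Finset.univ.filter (fun π => f π = i)).card ≤
      (Finset.univ.filter (fun π => 1 ≤ f π)).card := by
    have h1 : (Finset.univ.filter (fun π => f π = i)).card ≤ A i := by
      have := hsplit i hi; omega
    calc 2 ^ (i - 1) * (Finset.univ.filter (fun π => f π = i)).card
        ≤ 2 ^ (i - 1) * A i := Nat.mul_le_mul_left _ h1
      _ ≤ A 1 := hmain i hi
  refine ⟨hkey, fun hne => ?_⟩
  have hpos : (0 : ℝ) < ((Finset.univ.filter (fun π => 1 ≤ f π)).card : ℝ) := by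
    exact_mod_cast Finset.card_pos.mpr hne
  have hp : (0 : ℝ) < 2 ^ (i - 1) := by positivity
  rw [div_le_div_iff₀ hpos hp]
  have : ((2 ^ (i - 1) * (Finset.univ.filter (fun π => f π = i)).card : ℕ) : ℝ) ≤
      ((Finset.univ.filter (fun π => 1 ≤ f π)).card : ℝ) := by exact_mod_cast hkey
  push_cast at this
  linarith
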